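/- For every n ≥ 0, the spine process satisfies 𝕊₀ⁿ = (𝒬(T̃^{−1}(n)), …, 𝒬(1)) ∘ ϑ^n, where 𝒬(k) = μ₀∘θ_{T(k−1)} with μ₀ = Υ_{ζ₀}(𝒫_{τ₀−1}) (the point measure at the ladder epoch with its ζ₀ largest atoms removed), and T̃^{−1}(n) = max{k ≥ 0 : T(k) ≤ n}. -/

import Mathlib

open scoped Classical NNReal
noncomputable section

/-- Finite point measures on `(0,∞)`, modeled as multisets of atoms in `ℝ≥0`. -/
abbrev PtM := Multiset ℝ≥0

/-- A stick: a life-length together with a finite point measure of birth times. -/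
abbrev Stick := ℝ≥0 × PtM

/-- The space of doubly infinite sequences of sticks. -/
abbrev Om := ℤ → Stick

/-- The shift operator `θ_n`. -/
def theta (n : ℤ) (ω : Om) : Om := fun k => ω (n + k)

/-- The dual (time-reversal) operator `ϑ^n`. -/
def dual (n : ℤ) (ω : Om) : Om := fun k => ω (n - k - 1)

/-- Life length of the `k`-th individual. -/
def Vc (ω : Om) (k : ℤ) : ℝ≥0 := (ω k).1

/-- Point measure (ages at childbearing) of the `k`-th individual. -/
def Pc (ω : Om) (k : ℤ) : PtM := (ω k).2

/-- The Lukasiewicz path `S`. -/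
def Sw (ω : Om) (n : ℤ) : ℤ :=
  if 0 ≤ n then ∑ k ∈ Finset.range n.toNat, ((Multiset.card (Pc ω (k : ℤ)) : ℤ) - 1)
  else - ∑ k ∈ Finset.range (-n).toNat, ((Multiset.card (Pc ω (-(k : ℤ) - 1)) : ℤ) - 1)

/-- `π(ν)`: the supremum of the support (largest atom) of a finite point measure. -/
def piM (ν : PtM) : ℝ≥0 := ν.sup

/-- `Υ_j(ν)`: removes the `j` largest atoms of `ν`. -/
def upsilon (j : ℕ) (ν : PtM) : PtM :=
  ((ν.sort (· ≤ ·)).take (Multiset.card ν - j) : List ℝ≥0)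

/-- The map `Φ` driving the spine process dynamics. -/
def phiSp (Y : List PtM) (ν : PtM) : List PtM :=
  if ν = 0 then
    match Y.reverse.dropWhile (fun m => decide (Multiset.card m < 2)) with
    | [] => []
    | h :: t => (upsilon 1 h :: t).reverse
  else Y ++ [ν]

/-- The spine process `𝕊₀ⁿ`. -/
def spine (ω : Om) : ℕ → List PtM
  | 0 => []
  | n + 1 => phiSp (spine ω n) (Pc ω (n : ℤ))

/-- `π` extended to finite sequences of point measures. -/
def piL (Y : List PtM) : ℝ≥0 := (Y.map piM).sum

/-- The chronological height process `ℍ(n) = π(𝕊₀ⁿ)`. -/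
def Hchr (ω : Om) (n : ℕ) : ℝ≥0 := piL (spine ω n)

/-- The genealogical height process
`𝓗(n) = #{k ∈ {0,…,n−1} : S(k+1) ≤ min_{k+1 ≤ j ≤ n} S(j)}`. -/
def genH (ω : Om) (n : ℕ) : ℕ :=
  ((Finset.range n).filter
    (fun k : ℕ => ∀ j : ℕ, j ∈ Finset.Icc (k + 1) n → Sw ω ((k : ℤ) + 1) ≤ Sw ω (j : ℤ))).card

/-- Weak ascending ladder height times `T(k)` (valued `⊤` if nonexistent). -/
def ladderT (ω : Om) : ℕ → ℕ∞
  | 0 => 0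
  | k + 1 => sInf {x : ℕ∞ | ∃ m j : ℕ, x = (m : ℕ∞) ∧ ladderT ω k = (j : ℕ∞) ∧
      j < m ∧ Sw ω (j : ℤ) ≤ Sw ω (m : ℤ)}

/-- `T^{-1}(n) = min{k ≥ 0 : T(k) ≥ n}`. -/
def Tinv (ω : Om) (n : ℕ) : ℕ := sInf {k : ℕ | (n : ℕ∞) ≤ ladderT ω k}

/-- `T̃^{-1}(n) = max{k ≥ 0 : T(k) ≤ n}`. -/
def tildeTinv (ω : Om) (n : ℕ) : ℕ := sSup {k : ℕ | ladderT ω k ≤ (n : ℕ∞)}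

/-- First passage time upward `τ_ℓ = inf{k > 0 : S(k) ≥ ℓ}`. -/
def tauUp (ω : Om) (ℓ : ℤ) : ℕ∞ :=
  sInf {x : ℕ∞ | ∃ k : ℕ, x = (k : ℕ∞) ∧ 0 < k ∧ ℓ ≤ Sw ω (k : ℤ)}

/-- First hitting time downward `τ⁻_ℓ = inf{k ≥ 0 : S(k) = −ℓ}`. -/
def tauDown (ω : Om) (ℓ : ℤ) : ℕ∞ :=
  sInf {x : ℕ∞ | ∃ k : ℕ, x = (k : ℕ∞) ∧ Sw ω (k : ℤ) = -ℓ}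

/-- `τ_ℓ` as a natural number (junk value `0` when infinite). -/
def tauUpN (ω : Om) (ℓ : ℤ) : ℕ := (tauUp ω ℓ).toNat

/-- The undershoot `ζ_ℓ = ℓ − S(τ_ℓ − 1)`. -/
def zetaU (ω : Om) (ℓ : ℤ) : ℤ := ℓ - Sw ω ((tauUpN ω ℓ : ℤ) - 1)

/-- `μ_ℓ = Υ_{ζ_ℓ}(𝒫_{τ_ℓ − 1})`. -/
def muU (ω : Om) (ℓ : ℤ) : PtM := upsilon (zetaU ω ℓ).toNat (Pc ω ((tauUpN ω ℓ : ℤ) - 1))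

/-- `𝒬(k) = μ₀ ∘ θ_{T(k−1)}`. -/
def Qcal (ω : Om) (k : ℕ) : PtM := muU (theta ((ladderT ω (k - 1)).toNat : ℤ) ω) 0

/-- `𝕐(k) = π(𝒬(k))`. -/
def Ybb (ω : Om) (k : ℕ) : ℝ≥0 := piM (Qcal ω k)

/-- The backward maximum `L(m) = max_{0 ≤ k ≤ m} S(−k)`. -/
def Lmax (ω : Om) (m : ℕ) : ℤ :=
  Finset.sup' (Finset.range (m + 1)) Finset.nonempty_range_add_one (fun k => Sw ω (-(k : ℤ)))

/-- The ancestor set `𝒜(n) = {n − T(k)∘ϑ^n : k ≥ 0}` (only finite ladder times). -/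
def Aset (ω : Om) (n : ℕ) : Set ℤ :=
  {a | ∃ k j : ℕ, ladderT (dual (n : ℤ) ω) k = (j : ℕ∞) ∧ a = (n : ℤ) - (j : ℤ)}

/-- `mrca(m,n) = max(𝒜(m) ∩ 𝒜(n))`. -/
def mrcaZ (ω : Om) (m n : ℕ) : ℤ := sSup (Aset ω m ∩ Aset ω n)

/-- `χ(m,k) = inf{j ≥ m+1 : S(j) = S(m+1) − k}`. -/
def chiT (ω : Om) (m k : ℕ) : ℕ∞ :=
  sInf {x : ℕ∞ | ∃ j : ℕ, x = (j : ℕ∞) ∧ m + 1 ≤ j ∧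
    Sw ω (j : ℤ) = Sw ω ((m : ℤ) + 1) - (k : ℤ)}

/-- `χ(m) = inf{j ≥ m+1 : S(j) = S(m) − 1}`. -/
def chiF (ω : Om) (m : ℕ) : ℕ∞ :=
  sInf {x : ℕ∞ | ∃ j : ℕ, x = (j : ℕ∞) ∧ m + 1 ≤ j ∧ Sw ω (j : ℤ) = Sw ω (m : ℤ) - 1}

/-- The functional `D_ℓ(𝕊₀^m)` of the spine, expressed through the dual walk:
`D_ℓ = (Σ_{i : 0 < T(i) ≤ min(τ_ℓ, m)} 𝕐(i) − 1_{τ_ℓ ≤ m} π(μ_ℓ)) ∘ ϑ^m`, with `D_0 ≡ 0`. -/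
def Dfun (ω : Om) (m : ℕ) (ℓ : ℤ) : ℝ :=
  if ℓ < 1 then 0 else
    (∑ i ∈ (Finset.Icc 1 m).filter
        (fun i => 0 < ladderT (dual (m : ℤ) ω) i ∧
          ladderT (dual (m : ℤ) ω) i ≤ min (tauUp (dual (m : ℤ) ω) ℓ) (m : ℕ∞)),
      (Ybb (dual (m : ℤ) ω) i : ℝ))
    - (if tauUp (dual (m : ℤ) ω) ℓ ≤ (m : ℕ∞) then (piM (muU (dual (m : ℤ) ω) ℓ) : ℝ) else 0)

/-- `K_j = 2𝒱(j−1) − ℍ(j)`. -/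
def Kt (ω : Om) (j : ℕ) : ℝ := 2 * ∑ k ∈ Finset.range j, (Vc ω (k : ℤ) : ℝ) - (Hchr ω j : ℝ)

/-- The chronological contour process: on `[K_n, K_{n+1}]` it increases at rate `+1` from
`ℍ(n)` up to `ℍ(n) + V_n` and then decreases at rate `−1` down to `ℍ(n+1)`. -/
def contour (ω : Om) (t : ℝ) : ℝ :=
  let n := sSup {j : ℕ | Kt ω j ≤ t}
  min ((Hchr ω n : ℝ) + (t - Kt ω n)) ((Hchr ω (n + 1) : ℝ) + (Kt ω (n + 1) - t))


section Helpers

/-- infimum over naturals satisfying `P`, as `ℕ∞`. -/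
def eInf (P : ℕ → Prop) : ℕ∞ := sInf {x : ℕ∞ | ∃ m : ℕ, x = (m : ℕ∞) ∧ P m}

lemma eInf_le {P : ℕ → Prop} {m : ℕ} (h : P m) : eInf P ≤ (m : ℕ∞) :=
  sInf_le ⟨m, rfl, h⟩

lemma eInf_eq_top {P : ℕ → Prop} (h : ∀ m, ¬ P m) : eInf P = ⊤ :=
  sInf_eq_top.mpr (fun _ ⟨m, _, hPm⟩ => absurd hPm (h m))

lemma eInf_eq_coe {P : ℕ → Prop} {m : ℕ} (hm : P m) (hlt : ∀ i < m, ¬ P i) :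
    eInf P = (m : ℕ∞) := by
  refine le_antisymm (eInf_le hm) (le_sInf ?_)
  rintro a ⟨i, rfl, hi⟩
  exact_mod_cast Nat.not_lt.mp (fun h => hlt i h hi)

lemma eInf_elim {P : ℕ → Prop} {m : ℕ} (h : eInf P = (m : ℕ∞)) :
    P m ∧ ∀ i < m, ¬ P i := by
  by_cases hne : ∃ i, P i
  · obtain ⟨i, hi⟩ := hne
    have h0 := eInf_eq_coe (P := P) (Nat.find_spec ⟨i, hi⟩)
      (fun j hj => Nat.find_min ⟨i, hi⟩ hj)
    rw [h0] at h
    have : Nat.find ⟨i, hi⟩ = m := by exact_mod_cast h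
    subst this
    exact ⟨Nat.find_spec _, fun j hj => Nat.find_min _ hj⟩
  · push_neg at hne
    rw [eInf_eq_top hne] at h
    exact absurd h.symm (by simp)

lemma Sw_nat (η : Om) (m : ℕ) :
    Sw η (m : ℤ) = ∑ k ∈ Finset.range m, ((Multiset.card (Pc η (k : ℤ)) : ℤ) - 1) := by
  rw [Sw, if_pos (by positivity), Int.toNat_natCast]

lemma Sw_zero (η : Om) : Sw η 0 = 0 := by
  simpa using Sw_nat η 0

lemma Sw_succ (η : Om) (m : ℕ) :
    Sw η ((m : ℤ) + 1) = Sw η m + ((Multiset.card (Pc η (m : ℤ)) : ℤ) - 1) := by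
  have : ((m : ℤ) + 1) = ((m + 1 : ℕ) : ℤ) := by omega
  rw [this, Sw_nat, Sw_nat, Finset.sum_range_succ]

lemma theta_theta (a b : ℤ) (η : Om) : theta a (theta b η) = theta (b + a) η := by
  funext k; simp [theta, add_assoc]

lemma Pc_theta (t : ℤ) (η : Om) (k : ℤ) : Pc (theta t η) k = Pc η (t + k) := rfl

lemma Sw_theta (η : Om) (t m : ℕ) :
    Sw (theta (t : ℤ) η) (m : ℤ) = Sw η ((t : ℤ) + m) - Sw η t := by
  have h1 : ((t : ℤ) + m) = ((t + m : ℕ) : ℤ) := by omega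
  rw [h1, Sw_nat, Sw_nat, Sw_nat]
  rw [Finset.sum_range_add (f := fun k => ((Multiset.card (Pc η (k : ℤ)) : ℤ) - 1))]
  simp only [add_sub_cancel_left]
  refine Finset.sum_congr rfl (fun k _ => ?_)
  rw [Pc_theta]
  norm_cast

lemma dual_succ (ω : Om) (n : ℕ) :
    dual ((n : ℤ) + 1) ω = theta (-1) (dual (n : ℤ) ω) := by
  funext k; simp [dual, theta]; ring_nf

lemma Pc_negshift (η : Om) : Pc (theta (-1) η) 0 = Pc η (-1) := rfl

lemma Sw_negshift (η : Om) (m : ℕ) :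
    Sw (theta (-1) η) ((m : ℤ) + 1) = ((Multiset.card (Pc η (-1)) : ℤ) - 1) + Sw η m := by
  have : ((m : ℤ) + 1) = ((m + 1 : ℕ) : ℤ) := by omega
  rw [this, Sw_nat, Sw_nat, Finset.sum_range_succ']
  rw [add_comm]
  congr 1
  · refine Finset.sum_congr rfl (fun k _ => ?_)
    have h2 : ((-1 : ℤ) + ((k + 1 : ℕ) : ℤ)) = (k : ℤ) := by omega
    rw [Pc_theta, h2]


end Helpers
section Helpers2

lemma le_eInf {P : ℕ → Prop} {a : ℕ∞} (h : ∀ m : ℕ, P m → a ≤ (m : ℕ∞)) : a ≤ eInf P :=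
  le_sInf (by rintro x ⟨m, rfl, hm⟩; exact h m hm)

variable {η : Om}

lemma ladderT_zero : ladderT η 0 = 0 := rfl

lemma ladderT_succ_of_coe {k j : ℕ} (h : ladderT η k = (j : ℕ∞)) :
    ladderT η (k + 1) = eInf (fun m => j < m ∧ Sw η (j : ℤ) ≤ Sw η (m : ℤ)) := by
  show sInf _ = _
  unfold eInf
  congr 1
  ext x
  constructor
  · rintro ⟨m, j', rfl, hj', hlt, hS⟩
    have : j' = j := by rw [h] at hj'; exact_mod_cast hj'.symm
    subst this
    exact ⟨m, rfl, hlt, hS⟩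
  · rintro ⟨m, rfl, hlt, hS⟩
    exact ⟨m, j, rfl, h, hlt, hS⟩

lemma ladderT_succ_of_top {k : ℕ} (h : ladderT η k = ⊤) : ladderT η (k + 1) = ⊤ := by
  show sInf _ = _
  rw [sInf_eq_top]
  rintro a ⟨m, j, rfl, hj, _⟩
  rw [h] at hj
  exact absurd hj.symm (by simp)

lemma ladderT_le_succ (k : ℕ) : ladderT η k ≤ ladderT η (k + 1) := by
  cases h : ladderT η k with
  | top => rw [ladderT_succ_of_top h]
  | coe j =>
    rw [ladderT_succ_of_coe h]
    exact le_eInf fun m hm => by exact_mod_cast hm.1.le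

lemma ladderT_mono : Monotone (ladderT η) :=
  monotone_nat_of_le_succ ladderT_le_succ

lemma ladderT_ge : ∀ k : ℕ, (k : ℕ∞) ≤ ladderT η k := by
  intro k
  induction k with
  | zero => simp
  | succ k ih =>
    cases h : ladderT η k with
    | top => rw [ladderT_succ_of_top h]; exact le_top
    | coe j =>
      rw [ladderT_succ_of_coe h]
      refine le_eInf fun m hm => ?_
      rw [h] at ih
      have hkj : k ≤ j := by exact_mod_cast ih
      exact_mod_cast Nat.succ_le_of_lt (lt_of_le_of_lt hkj hm.1)

lemma ladderT_strict {k j m : ℕ} (h : ladderT η k = (j : ℕ∞))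
    (h' : ladderT η (k + 1) = (m : ℕ∞)) :
    j < m ∧ Sw η (j : ℤ) ≤ Sw η (m : ℤ) ∧
      ∀ i : ℕ, j < i → i < m → ¬ Sw η (j : ℤ) ≤ Sw η (i : ℤ) := by
  rw [ladderT_succ_of_coe h] at h'
  obtain ⟨⟨h1, h2⟩, h3⟩ := eInf_elim h'
  exact ⟨h1, h2, fun i hji him hS => h3 i him ⟨hji, hS⟩⟩

lemma ladderT_isMax : ∀ (k : ℕ) {m : ℕ}, ladderT η k = (m : ℕ∞) →
    ∀ i : ℕ, i < m → Sw η (i : ℤ) ≤ Sw η (m : ℤ) := by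
  intro k
  induction k with
  | zero =>
    intro m h i hi
    rw [ladderT_zero] at h
    have : m = 0 := by exact_mod_cast h.symm
    omega
  | succ k ih =>
    intro m h i hi
    cases hk : ladderT η k with
    | top => rw [ladderT_succ_of_top hk] at h; exact absurd h (by simp)
    | coe j =>
      obtain ⟨hjm, hS, hmin⟩ := ladderT_strict hk h
      rcases lt_trichotomy i j with hij | rfl | hji
      · exact le_trans (ih hk i hij) hS
      · exact hS
      · exact le_trans (not_le.mp (hmin i hji hi)).le hS

lemma ladderT_height_nonneg {k m : ℕ} (h : ladderT η k = (m : ℕ∞)) :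
    0 ≤ Sw η (m : ℤ) := by
  rcases Nat.eq_zero_or_pos m with rfl | hm
  · simp [Sw_zero]
  · have := ladderT_isMax k h 0 hm
    rwa [Nat.cast_zero, Sw_zero] at this

lemma ladderT_height_mono {k l a b : ℕ} (hkl : k ≤ l) (hk : ladderT η k = (a : ℕ∞))
    (hl : ladderT η l = (b : ℕ∞)) : Sw η (a : ℤ) ≤ Sw η (b : ℤ) := by
  have : (a : ℕ∞) ≤ (b : ℕ∞) := by rw [← hk, ← hl]; exact ladderT_mono hkl
  have hab : a ≤ b := by exact_mod_cast this
  rcases eq_or_lt_of_le hab with rfl | hab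
  · exact le_rfl
  · exact ladderT_isMax l hl a hab

lemma tildeTinv_eq {m n : ℕ} (h1 : ladderT η m ≤ (n : ℕ∞))
    (h2 : ¬ ladderT η (m + 1) ≤ (n : ℕ∞)) : tildeTinv η n = m := by
  have hub : ∀ k ∈ {k : ℕ | ladderT η k ≤ (n : ℕ∞)}, k ≤ m := by
    intro k hk
    by_contra hc
    push_neg at hc
    exact h2 (le_trans (ladderT_mono hc) hk)
  exact le_antisymm (csSup_le ⟨m, h1⟩ hub) (le_csSup ⟨m, fun k hk => hub k hk⟩ h1)

lemma tildeTinv_spec (η : Om) (n : ℕ) :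
    ladderT η (tildeTinv η n) ≤ (n : ℕ∞) ∧ ¬ ladderT η (tildeTinv η n + 1) ≤ (n : ℕ∞) := by
  have hbdd : BddAbove {k : ℕ | ladderT η k ≤ (n : ℕ∞)} := by
    refine ⟨n, fun k hk => ?_⟩
    have := le_trans (ladderT_ge k) hk
    exact_mod_cast this
  have hne : {k : ℕ | ladderT η k ≤ (n : ℕ∞)}.Nonempty := ⟨0, by simp [ladderT_zero]⟩
  have hmem := Nat.sSup_mem hne hbdd
  refine ⟨hmem, fun hc => ?_⟩
  have h3 : tildeTinv η n + 1 ≤ tildeTinv η n := le_csSup hbdd hc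
  omega

lemma ladder_reach {m : ℕ} (hM : ∀ i : ℕ, i < m → Sw η (i : ℤ) ≤ Sw η (m : ℤ)) :
    ladderT η (tildeTinv η m) = (m : ℕ∞) := by
  obtain ⟨h1, h2⟩ := tildeTinv_spec η m
  cases h : ladderT η (tildeTinv η m) with
  | top => rw [h] at h1; exact absurd h1 (by simp)
  | coe j =>
    rw [h] at h1
    have hjm : j ≤ m := by exact_mod_cast h1
    rcases eq_or_lt_of_le hjm with rfl | hjm
    · rfl
    · exfalso
      apply h2
      rw [ladderT_succ_of_coe h]
      exact le_trans (eInf_le ⟨hjm, hM j hjm⟩) le_rfl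

lemma ladderT_pos_finite {k j m : ℕ} (hk : k ≤ j) (h : ladderT η j = (m : ℕ∞)) :
    ∃ a : ℕ, ladderT η k = (a : ℕ∞) := by
  cases hc : ladderT η k with
  | top =>
    have := ladderT_mono (η := η) hk
    rw [hc, h] at this
    exact absurd this (by simp)
  | coe a => exact ⟨a, rfl⟩

end Helpers2
section Helpers3

lemma eInf_top_elim {P : ℕ → Prop} (h : eInf P = ⊤) (m : ℕ) : ¬ P m := fun hm => by
  have := eInf_le hm
  rw [h] at this
  exact absurd this (by simp)

lemma upsilon_zero (ν : PtM) : upsilon 0 ν = ν := by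
  unfold upsilon
  rw [Nat.sub_zero, List.take_of_length_le (le_of_eq (Multiset.length_sort _)),
    Multiset.sort_eq]

lemma card_upsilon (j : ℕ) (ν : PtM) :
    Multiset.card (upsilon j ν) = Multiset.card ν - j := by
  unfold upsilon
  rw [Multiset.coe_card, List.length_take, Multiset.length_sort]
  omega

lemma sort_coe_sorted (l : List ℝ≥0) (hl : l.Pairwise (· ≤ ·)) :
    Multiset.sort (l : PtM) (· ≤ ·) = l := by
  refine List.Perm.eq_of_pairwise' (Multiset.pairwise_sort _ _) hl ?_
  exact Multiset.coe_eq_coe.mp (Multiset.sort_eq _ _)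

lemma upsilon_one_coe (l : List ℝ≥0) (hl : l.Pairwise (· ≤ ·)) :
    upsilon 1 (l : PtM) = ((l.take (l.length - 1) : List ℝ≥0) : PtM) := by
  unfold upsilon
  rw [Multiset.coe_card, sort_coe_sorted l hl]

lemma upsilon_succ (j : ℕ) (ν : PtM) : upsilon (j + 1) ν = upsilon 1 (upsilon j ν) := by
  have hsorted : ((Multiset.sort ν (· ≤ ·)).take (Multiset.card ν - j)).Pairwise (· ≤ ·) :=
    (Multiset.pairwise_sort _ _).take
  have h1 : upsilon j ν = (((ν.sort (· ≤ ·)).take (Multiset.card ν - j) : List ℝ≥0) : PtM) := rfl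
  rw [h1, upsilon_one_coe _ hsorted, List.take_take, List.length_take, Multiset.length_sort]
  unfold upsilon
  have hmm : min (min (Multiset.card ν - j) (Multiset.card ν) - 1) (Multiset.card ν - j)
      = Multiset.card ν - (j + 1) := by omega
  rw [hmm]

lemma tauUp_eInf (η : Om) (ℓ : ℤ) :
    tauUp η ℓ = eInf (fun k => 0 < k ∧ ℓ ≤ Sw η (k : ℤ)) := rfl

variable {η : Om}

lemma tau_shift {k t s : ℕ} (ht : ladderT η k = (t : ℕ∞)) (hs : ladderT η (k + 1) = (s : ℕ∞)) :
    tauUp (theta (t : ℤ) η) 0 = ((s - t : ℕ) : ℕ∞) := by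
  obtain ⟨hts, hSts, hmin⟩ := ladderT_strict ht hs
  rw [tauUp_eInf]
  refine eInf_eq_coe ⟨by omega, ?_⟩ ?_
  · rw [Sw_theta]
    have : (t : ℤ) + ((s - t : ℕ) : ℤ) = (s : ℤ) := by
      omega
    rw [this]
    omega
  · rintro i hi ⟨hi0, hSi⟩
    rw [Sw_theta] at hSi
    have h1 : (t : ℤ) + (i : ℤ) = ((t + i : ℕ) : ℤ) := by omega
    rw [h1] at hSi
    exact hmin (t + i) (by omega) (by omega) (by omega)

lemma tau_shift_top {k t : ℕ} (ht : ladderT η k = (t : ℕ∞)) (hs : ladderT η (k + 1) = ⊤) :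
    tauUp (theta (t : ℤ) η) 0 = ⊤ := by
  rw [ladderT_succ_of_coe ht] at hs
  rw [tauUp_eInf]
  refine eInf_eq_top fun m hm => ?_
  obtain ⟨hm0, hSm⟩ := hm
  rw [Sw_theta] at hSm
  have h1 : (t : ℤ) + (m : ℤ) = ((t + m : ℕ) : ℤ) := by omega
  rw [h1] at hSm
  exact eInf_top_elim hs (t + m) ⟨by omega, by omega⟩

lemma Qcal_succ {k t s : ℕ} (ht : ladderT η k = (t : ℕ∞)) (hs : ladderT η (k + 1) = (s : ℕ∞)) :
    Qcal η (k + 1) =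
      upsilon (Sw η (t : ℤ) - Sw η ((s : ℤ) - 1)).toNat (Pc η ((s : ℤ) - 1)) := by
  obtain ⟨hts, hSts, hmin⟩ := ladderT_strict ht hs
  unfold Qcal muU
  rw [Nat.add_sub_cancel, ht, ENat.toNat_coe]
  have htau : tauUpN (theta (t : ℤ) η) 0 = s - t := by
    rw [tauUpN, tau_shift ht hs, ENat.toNat_coe]
  have harg : ((s - t : ℕ) : ℤ) - 1 = ((s - t - 1 : ℕ) : ℤ) := by omega
  have harg2 : (t : ℤ) + ((s - t - 1 : ℕ) : ℤ) = (s : ℤ) - 1 := by omega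
  have hz : zetaU (theta (t : ℤ) η) 0 = Sw η (t : ℤ) - Sw η ((s : ℤ) - 1) := by
    unfold zetaU
    rw [htau, harg, Sw_theta, harg2]
    ring
  rw [hz, htau, Pc_theta]
  congr 2
  omega

lemma card_Qcal_succ {k t s : ℕ} (ht : ladderT η k = (t : ℕ∞))
    (hs : ladderT η (k + 1) = (s : ℕ∞)) :
    (Multiset.card (Qcal η (k + 1)) : ℤ) = Sw η (s : ℤ) - Sw η (t : ℤ) + 1 := by
  obtain ⟨hts, hSts, hmin⟩ := ladderT_strict ht hs
  have hs1 : ((s : ℤ) - 1) = ((s - 1 : ℕ) : ℤ) := by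
    omega
  have hcard : (Multiset.card (Pc η ((s : ℤ) - 1)) : ℤ) = Sw η (s : ℤ) - Sw η ((s : ℤ) - 1) + 1 := by
    have := Sw_succ η (s - 1)
    rw [← hs1] at this
    have h2 : ((s : ℤ) - 1) + 1 = (s : ℤ) := by ring
    rw [h2] at this
    omega
  have hzeta : Sw η ((s : ℤ) - 1) ≤ Sw η (t : ℤ) := by
    rcases eq_or_lt_of_le (by omega : t ≤ s - 1) with heq | hlt
    · rw [hs1, ← heq]
    · have := hmin (s - 1) (by omega) (by omega)
      rw [← hs1] at this
      omega
  have hzeta2 : Sw η (t : ℤ) - Sw η ((s : ℤ) - 1) ≤ Sw η (s : ℤ) - Sw η ((s : ℤ) - 1) := by omega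
  rw [Qcal_succ ht hs, card_upsilon]
  have hle : (Sw η (t : ℤ) - Sw η ((s : ℤ) - 1)).toNat ≤ Multiset.card (Pc η ((s : ℤ) - 1)) := by
    omega
  omega

lemma map_range_reverse {α : Type*} (f : ℕ → α) (N : ℕ) :
    ((List.range N).map f).reverse = (List.range N).map (fun i => f (N - 1 - i)) := by
  induction N with
  | zero => simp
  | succ N ih =>
    conv_lhs => rw [List.range_succ]
    rw [List.map_append, List.reverse_append, ih]
    conv_rhs => rw [List.range_succ_eq_map]
    simp only [List.map_cons, List.map_nil, List.map_map, List.reverse_cons, List.reverse_nil,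
      List.nil_append, List.cons_append]
    congr 1
    refine List.map_congr_left fun i _ => ?_
    simp only [Function.comp]
    congr 1
    omega

end Helpers3
section Helpers4

variable {η : Om}

lemma theta_zero (η : Om) : theta 0 η = η := by
  funext k; simp [theta]

lemma Sw_negshift' {m : ℕ} (hm : 1 ≤ m) :
    Sw (theta (-1) η) (m : ℤ) =
      ((Multiset.card (Pc η (-1)) : ℤ) - 1) + Sw η ((m - 1 : ℕ) : ℤ) := by
  have h : (m : ℤ) = (((m - 1 : ℕ) : ℤ)) + 1 := by omega
  rw [h, Sw_negshift]

lemma ladderT_strict_mono : ∀ (l k a b : ℕ), k < l → ladderT η k = (a : ℕ∞) →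
    ladderT η l = (b : ℕ∞) → a < b := by
  intro l
  induction l with
  | zero => omega
  | succ l ih =>
    intro k a b hkl hk hl
    obtain ⟨c, hc⟩ := ladderT_pos_finite (Nat.le_succ l) hl
    have hcb : c < b := (ladderT_strict hc hl).1
    rcases Nat.lt_succ_iff_lt_or_eq.mp hkl with h | rfl
    · exact lt_trans (ih k a c h hk hc) hcb
    · rw [hk] at hc
      have : a = c := by exact_mod_cast hc
      omega

/-- step lemma : transfer of ladder recursion under prepending one stick. -/
lemma ladder_shift_step_coe {K l t s : ℕ}
    (hK : ladderT (theta (-1) η) K = ((t + 1 : ℕ) : ℕ∞))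
    (hl : ladderT η l = (t : ℕ∞)) (hs : ladderT η (l + 1) = (s : ℕ∞)) :
    ladderT (theta (-1) η) (K + 1) = ((s + 1 : ℕ) : ℕ∞) := by
  obtain ⟨hts, hSts, hmin⟩ := ladderT_strict hl hs
  rw [ladderT_succ_of_coe hK]
  refine eInf_eq_coe ⟨by omega, ?_⟩ ?_
  · rw [Sw_negshift' (by omega : 1 ≤ t + 1), Sw_negshift' (by omega : 1 ≤ s + 1)]
    simp only [Nat.add_sub_cancel]
    omega
  · rintro i hi ⟨hti, hSi⟩
    rw [Sw_negshift' (by omega : 1 ≤ t + 1), Sw_negshift' (by omega : 1 ≤ i)] at hSi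
    simp only [Nat.add_sub_cancel] at hSi
    exact hmin (i - 1) (by omega) (by omega) (by omega)

lemma ladder_shift_step_top {K l t : ℕ}
    (hK : ladderT (theta (-1) η) K = ((t + 1 : ℕ) : ℕ∞))
    (hl : ladderT η l = (t : ℕ∞)) (hs : ladderT η (l + 1) = ⊤) :
    ladderT (theta (-1) η) (K + 1) = ⊤ := by
  rw [ladderT_succ_of_coe hl] at hs
  rw [ladderT_succ_of_coe hK]
  refine eInf_eq_top fun m hm => ?_
  obtain ⟨htm, hSm⟩ := hm
  rw [Sw_negshift' (by omega : 1 ≤ t + 1), Sw_negshift' (by omega : 1 ≤ m)] at hSm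
  simp only [Nat.add_sub_cancel] at hSm
  exact eInf_top_elim hs (m - 1) ⟨by omega, by omega⟩

lemma ladder_A_one (hc : 1 ≤ Multiset.card (Pc η (-1))) :
    ladderT (theta (-1) η) 1 = ((1 : ℕ) : ℕ∞) := by
  rw [show (1 : ℕ) = 0 + 1 from rfl, ladderT_succ_of_coe (ladderT_zero (η := theta (-1) η))]
  refine eInf_eq_coe ⟨by omega, ?_⟩ (by omega)
  rw [Nat.cast_zero, Sw_zero, Sw_negshift' (by omega : 1 ≤ 0 + 1)]
  simp only [Nat.add_sub_cancel, Nat.cast_zero, Sw_zero]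
  omega

lemma tau1_coe_elim {t : ℕ} (hτ : tauUp η 1 = (t : ℕ∞)) :
    1 ≤ Sw η (t : ℤ) ∧ (∀ i : ℕ, i < t → Sw η (i : ℤ) ≤ 0) ∧ 1 ≤ t := by
  rw [tauUp_eInf] at hτ
  obtain ⟨⟨ht0, ht1⟩, hmin⟩ := eInf_elim hτ
  refine ⟨ht1, fun i hi => ?_, ht0⟩
  rcases Nat.eq_zero_or_pos i with rfl | hipos
  · rw [Nat.cast_zero, Sw_zero]
  · have := hmin i hi
    omega

lemma tau1_top_elim (hτ : tauUp η 1 = ⊤) (i : ℕ) : Sw η (i : ℤ) ≤ 0 := by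
  rw [tauUp_eInf] at hτ
  rcases Nat.eq_zero_or_pos i with rfl | hipos
  · rw [Nat.cast_zero, Sw_zero]
  · have := eInf_top_elim hτ i
    omega

lemma ladder_B_one_coe (hc : Pc η (-1) = 0) {t : ℕ} (hτ : tauUp η 1 = (t : ℕ∞)) :
    ladderT (theta (-1) η) 1 = ((t + 1 : ℕ) : ℕ∞) := by
  obtain ⟨ht1, hmin, ht0⟩ := tau1_coe_elim hτ
  rw [show (1 : ℕ) = 0 + 1 from rfl, ladderT_succ_of_coe (ladderT_zero (η := theta (-1) η))]
  have hcard : (Multiset.card (Pc η (-1)) : ℤ) = 0 := by rw [hc]; simp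
  refine eInf_eq_coe ⟨by omega, ?_⟩ ?_
  · rw [Nat.cast_zero, Sw_zero, Sw_negshift' (by omega : 1 ≤ t + 1), hcard]
    simp only [Nat.add_sub_cancel]
    omega
  · rintro i hi ⟨hi0, hSi⟩
    rw [Nat.cast_zero, Sw_zero, Sw_negshift' (by omega : 1 ≤ i), hcard] at hSi
    have := hmin (i - 1) (by omega)
    omega

lemma ladder_B_one_top (hc : Pc η (-1) = 0) (hτ : tauUp η 1 = ⊤) :
    ladderT (theta (-1) η) 1 = ⊤ := by
  rw [show (1 : ℕ) = 0 + 1 from rfl, ladderT_succ_of_coe (ladderT_zero (η := theta (-1) η))]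
  have hcard : (Multiset.card (Pc η (-1)) : ℤ) = 0 := by rw [hc]; simp
  refine eInf_eq_top fun m hm => ?_
  obtain ⟨hm0, hSm⟩ := hm
  rw [Nat.cast_zero, Sw_zero, Sw_negshift' (by omega : 1 ≤ m), hcard] at hSm
  have := tau1_top_elim hτ (m - 1)
  omega

lemma Qcal_negshift {k l t : ℕ}
    (hK : ladderT (theta (-1) η) k = ((t + 1 : ℕ) : ℕ∞))
    (hl : ladderT η l = (t : ℕ∞)) :
    Qcal (theta (-1) η) (k + 1) = Qcal η (l + 1) := by
  unfold Qcal
  have harg : (-1 : ℤ) + (((t + 1 : ℕ) : ℕ∞).toNat : ℤ) = (((t : ℕ∞)).toNat : ℤ) := by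
    rw [ENat.toNat_coe, ENat.toNat_coe]; omega
  rw [Nat.add_sub_cancel, Nat.add_sub_cancel, hK, hl, theta_theta, harg]

lemma Qcal_one_A (hc : 1 ≤ Multiset.card (Pc η (-1))) :
    Qcal (theta (-1) η) 1 = Pc η (-1) := by
  unfold Qcal
  rw [Nat.sub_self, ladderT_zero, ENat.toNat_zero, Nat.cast_zero, theta_zero]
  have htau : tauUp (theta (-1) η) 0 = ((1 : ℕ) : ℕ∞) := by
    rw [tauUp_eInf]
    refine eInf_eq_coe ⟨by omega, ?_⟩ (by omega)
    rw [Sw_negshift' (by omega : 1 ≤ 1)]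
    simp only [Nat.sub_self, Nat.cast_zero, Sw_zero]
    omega
  unfold muU zetaU
  rw [tauUpN, htau, ENat.toNat_coe]
  have h1 : ((1 : ℕ) : ℤ) - 1 = ((0 : ℕ) : ℤ) := by norm_num
  rw [h1]
  simp only [Nat.cast_zero, Sw_zero, Int.toNat_zero]
  norm_num
  rw [upsilon_zero]
  rfl

lemma Qcal_one_B (hc : Pc η (-1) = 0) {t : ℕ} (hτ : tauUp η 1 = (t : ℕ∞)) :
    Qcal (theta (-1) η) 1 =
      upsilon (1 - Sw η ((t : ℤ) - 1)).toNat (Pc η ((t : ℤ) - 1)) := by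
  obtain ⟨ht1, hmin, ht0⟩ := tau1_coe_elim hτ
  have hcard : (Multiset.card (Pc η (-1)) : ℤ) = 0 := by rw [hc]; simp
  unfold Qcal
  rw [Nat.sub_self, ladderT_zero, ENat.toNat_zero, Nat.cast_zero, theta_zero]
  have htau : tauUp (theta (-1) η) 0 = ((t + 1 : ℕ) : ℕ∞) := by
    rw [tauUp_eInf]
    refine eInf_eq_coe ⟨by omega, ?_⟩ ?_
    · rw [Sw_negshift' (by omega : 1 ≤ t + 1), hcard]
      simp only [Nat.add_sub_cancel]
      omega
    · rintro i hi ⟨hi0, hSi⟩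
      rw [Sw_negshift' (by omega : 1 ≤ i), hcard] at hSi
      have := hmin (i - 1) (by omega)
      omega
  unfold muU zetaU
  rw [tauUpN, htau, ENat.toNat_coe]
  have h1 : ((t + 1 : ℕ) : ℤ) - 1 = ((t : ℕ) : ℤ) := by omega
  rw [h1]
  have h2 : Sw (theta (-1) η) ((t : ℕ) : ℤ) = Sw η ((t : ℤ) - 1) - 1 := by
    rw [Sw_negshift' (by omega : 1 ≤ t), hcard]
    have : ((t - 1 : ℕ) : ℤ) = (t : ℤ) - 1 := by omega
    rw [this]
    ring
  rw [h2]
  have h3 : Pc (theta (-1) η) ((t : ℤ)) = Pc η ((t : ℤ) - 1) := by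
    have harg : (-1 : ℤ) + (t : ℤ) = (t : ℤ) - 1 := by ring
    rw [Pc_theta, harg]
  rw [h3]
  congr 1
  omega

end Helpers4
section Helpers5

variable {η : Om}

lemma dropWhile_all {α : Type*} (p : α → Bool) :
    ∀ (l : List α), (∀ x ∈ l, p x = true) → List.dropWhile p l = [] := by
  intro l h
  induction l with
  | nil => rfl
  | cons a l ih =>
    rw [List.dropWhile_cons, if_pos (h a (by simp))]
    exact ih (fun x hx => h x (by simp [hx]))

lemma dropWhile_concat {α : Type*} (p : α → Bool) :
    ∀ (l₁ : List α) (h : α) (l₂ : List α), (∀ x ∈ l₁, p x = true) → p h = false →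
      List.dropWhile p (l₁ ++ h :: l₂) = h :: l₂ := by
  intro l₁
  induction l₁ with
  | nil =>
    intro h l₂ _ hh
    rw [List.nil_append, List.dropWhile_cons, if_neg (by simp [hh])]
  | cons a l ih =>
    intro h l₂ hl hh
    rw [List.cons_append, List.dropWhile_cons, if_pos (hl a (by simp))]
    exact ih h l₂ (fun x hx => hl x (by simp [hx])) hh

lemma ladderT_le_coe_elim {k n : ℕ} (h : ladderT η k ≤ (n : ℕ∞)) :
    ∃ a : ℕ, a ≤ n ∧ ladderT η k = (a : ℕ∞) := by
  cases hc : ladderT η k with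
  | top => rw [hc] at h; exact absurd h (by simp)
  | coe a =>
    rw [hc] at h
    exact ⟨a, by exact_mod_cast h, rfl⟩

/-- chain lemma case A -/
lemma chain_A (hc : 1 ≤ Multiset.card (Pc η (-1))) :
    ∀ (k a : ℕ), ladderT η k = (a : ℕ∞) →
      ladderT (theta (-1) η) (k + 1) = ((a + 1 : ℕ) : ℕ∞) := by
  intro k
  induction k with
  | zero =>
    intro a ha
    rw [ladderT_zero] at ha
    have : a = 0 := by exact_mod_cast ha.symm
    subst this
    exact ladder_A_one hc
  | succ k ih =>
    intro a ha
    obtain ⟨c, hc'⟩ := ladderT_pos_finite (Nat.le_succ k) ha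
    exact ladder_shift_step_coe (ih c hc') hc' ha

/-- chain lemma case B -/
lemma chain_B (hc : Pc η (-1) = 0) {t j : ℕ} (hτ : tauUp η 1 = (t : ℕ∞))
    (hj : ladderT η j = (t : ℕ∞)) :
    ∀ (k a : ℕ), ladderT η (j + k) = (a : ℕ∞) →
      ladderT (theta (-1) η) (k + 1) = ((a + 1 : ℕ) : ℕ∞) := by
  intro k
  induction k with
  | zero =>
    intro a ha
    rw [Nat.add_zero, hj] at ha
    have : a = t := by exact_mod_cast ha.symm
    subst this
    exact ladder_B_one_coe hc hτ
  | succ k ih =>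
    intro a ha
    obtain ⟨c, hc'⟩ := ladderT_pos_finite (by omega : j + k ≤ j + (k + 1)) ha
    rw [show j + (k + 1) = (j + k) + 1 from rfl] at ha
    exact ladder_shift_step_coe (ih c hc') hc' ha

lemma Yrev (η : Om) (N : ℕ) :
    ((List.range N).map (fun i => Qcal η (N - i))).reverse
      = (List.range N).map (fun i => Qcal η (i + 1)) := by
  rw [map_range_reverse]
  refine List.map_congr_left fun i hi => ?_
  rw [List.mem_range] at hi
  congr 1
  omega

/-- Main step lemma, case A. -/
lemma step_A (η : Om) (n : ℕ) (hc : 1 ≤ Multiset.card (Pc η (-1))) :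
    (List.range (tildeTinv (theta (-1) η) (n + 1))).map
        (fun i => Qcal (theta (-1) η) (tildeTinv (theta (-1) η) (n + 1) - i))
      = ((List.range (tildeTinv η n)).map (fun i => Qcal η (tildeTinv η n - i)))
          ++ [Pc η (-1)] := by
  obtain ⟨hN1, hN2⟩ := tildeTinv_spec η n
  set N := tildeTinv η n with hN
  obtain ⟨a, han, ha⟩ := ladderT_le_coe_elim hN1
  have hNeg : tildeTinv (theta (-1) η) (n + 1) = N + 1 := by
    refine tildeTinv_eq ?_ ?_
    · rw [chain_A hc N a ha]
      exact_mod_cast by omega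
    · cases hs : ladderT η (N + 1) with
      | top =>
        rw [ladder_shift_step_top (chain_A hc N a ha) ha hs]
        intro hcon
        rw [top_le_iff] at hcon
        exact (ENat.coe_ne_top (n + 1)) (by exact_mod_cast hcon)
      | coe s =>
        rw [hs] at hN2
        have hsn : ¬ s ≤ n := fun h => hN2 (by exact_mod_cast h)
        rw [ladder_shift_step_coe (chain_A hc N a ha) ha hs]
        intro hcon
        have : s + 1 ≤ n + 1 := by exact_mod_cast hcon
        omega
  rw [hNeg, List.range_succ, List.map_append]
  congr 1
  · refine List.map_congr_left fun i hi => ?_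
    rw [List.mem_range] at hi
    obtain ⟨c, hc'⟩ := ladderT_pos_finite (by omega : N - i - 1 ≤ N) ha
    have hK : ladderT (theta (-1) η) (N - i) = ((c + 1 : ℕ) : ℕ∞) := by
      have := chain_A hc (N - i - 1) c hc'
      rwa [show N - i - 1 + 1 = N - i by omega] at this
    have := Qcal_negshift hK hc'
    rw [show N - i - 1 + 1 = N - i by omega] at this
    rw [show N + 1 - i = (N - i) + 1 by omega, this]
  · simp only [List.map_singleton]
    rw [show N + 1 - N = 1 by omega, Qcal_one_A hc]

end Helpers5
section Helpers6

variable {η : Om}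

lemma map_range_split {α : Type*} (f : ℕ → α) (M j : ℕ) (h1 : 1 ≤ j) (hjM : j ≤ M) :
    (List.range M).map f = ((List.range (j - 1)).map f)
      ++ (f (j - 1) :: (List.range (M - j)).map (fun i => f (i + j))) := by
  conv_lhs => rw [show M = (j - 1) + (1 + (M - j)) by omega]
  rw [List.range_add, List.map_append]
  congr 1
  rw [List.map_map, List.range_add, List.map_append, List.map_map]
  simp only [show List.range 1 = [0] by decide, List.map_cons, List.map_nil,
    List.singleton_append]
  congr 1
  refine List.map_congr_left fun i _ => ?_
  simp only [Function.comp]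
  congr 1
  omega

lemma step_main (η : Om) (n : ℕ) :
    (List.range (tildeTinv (theta (-1) η) (n + 1))).map
        (fun i => Qcal (theta (-1) η) (tildeTinv (theta (-1) η) (n + 1) - i))
      = phiSp ((List.range (tildeTinv η n)).map (fun i => Qcal η (tildeTinv η n - i)))
          (Pc η (-1)) := by
  by_cases hc : Pc η (-1) = 0
  case neg =>
    rw [phiSp, if_neg hc]
    exact step_A η n (Multiset.card_pos.mpr hc)
  rw [phiSp, if_pos hc]
  obtain ⟨hN1, hN2⟩ := tildeTinv_spec η n
  set N := tildeTinv η n with hNdef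
  obtain ⟨a, han, ha⟩ := ladderT_le_coe_elim hN1
  have hfin : ∀ k, k ≤ N → ∃ c, c ≤ a ∧ ladderT η k = ((c : ℕ) : ℕ∞) := by
    intro k hk
    obtain ⟨c, hc'⟩ := ladderT_pos_finite hk ha
    refine ⟨c, ?_, hc'⟩
    have := ladderT_mono (η := η) hk
    rw [hc', ha] at this
    exact_mod_cast this
  cases hτ : tauUp η 1 with
  | top =>
    have hall : ∀ x ∈ (((List.range N).map (fun i => Qcal η (N - i))).reverse),
        (fun m => decide (Multiset.card m < 2)) x = true := by
      rw [Yrev]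
      intro x hx
      rw [List.mem_map] at hx
      obtain ⟨i, hi, rfl⟩ := hx
      rw [List.mem_range] at hi
      obtain ⟨c, hca, hc'⟩ := hfin i (by omega)
      obtain ⟨d, hda, hd'⟩ := hfin (i + 1) (by omega)
      have hcard := card_Qcal_succ hc' hd'
      have h1 : 0 ≤ Sw η (c : ℤ) := ladderT_height_nonneg hc'
      have h2 : 0 ≤ Sw η (d : ℤ) := ladderT_height_nonneg hd'
      have h3 := tau1_top_elim hτ c
      have h4 := tau1_top_elim hτ d
      simp only [decide_eq_true_eq]
      omega
    rw [dropWhile_all _ _ hall]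
    have hNeg : tildeTinv (theta (-1) η) (n + 1) = 0 := by
      refine tildeTinv_eq ?_ ?_
      · rw [ladderT_zero]; exact zero_le
      · rw [show (0 : ℕ) + 1 = 1 from rfl, ladder_B_one_top hc hτ]
        intro hcon; rw [top_le_iff] at hcon
        exact (ENat.coe_ne_top (n + 1)) (by exact_mod_cast hcon)
    rw [hNeg]
    simp only [List.range_zero, List.map_nil]
  | coe t =>
    obtain ⟨ht1, hmin, ht0⟩ := tau1_coe_elim hτ
    by_cases htn : t ≤ n
    case neg =>
      have hall : ∀ x ∈ (((List.range N).map (fun i => Qcal η (N - i))).reverse),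
          (fun m => decide (Multiset.card m < 2)) x = true := by
        rw [Yrev]
        intro x hx
        rw [List.mem_map] at hx
        obtain ⟨i, hi, rfl⟩ := hx
        rw [List.mem_range] at hi
        obtain ⟨c, hca, hc'⟩ := hfin i (by omega)
        obtain ⟨d, hda, hd'⟩ := hfin (i + 1) (by omega)
        have hcard := card_Qcal_succ hc' hd'
        have h1 : 0 ≤ Sw η (c : ℤ) := ladderT_height_nonneg hc'
        have h2 : 0 ≤ Sw η (d : ℤ) := ladderT_height_nonneg hd'
        have h3 := hmin c (by omega)
        have h4 := hmin d (by omega)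
        simp only [decide_eq_true_eq]
        omega
      rw [dropWhile_all _ _ hall]
      have hNeg : tildeTinv (theta (-1) η) (n + 1) = 0 := by
        refine tildeTinv_eq ?_ ?_
        · rw [ladderT_zero]; exact zero_le
        · rw [show (0 : ℕ) + 1 = 1 from rfl, ladder_B_one_coe hc hτ]
          intro hcon
          have : t + 1 ≤ n + 1 := by exact_mod_cast hcon
          omega
      rw [hNeg]
      simp only [List.range_zero, List.map_nil]
    case pos =>
      have hwm : ∀ i : ℕ, i < t → Sw η (i : ℤ) ≤ Sw η (t : ℤ) :=
        fun i hi => le_trans (hmin i hi) (by omega)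
      have hj : ladderT η (tildeTinv η t) = ((t : ℕ) : ℕ∞) := ladder_reach hwm
      set j := tildeTinv η t with hjdef
      have hj1 : 1 ≤ j := by
        rcases Nat.eq_zero_or_pos j with h0 | h
        · rw [h0, ladderT_zero] at hj
          have : (0 : ℕ) = t := by exact_mod_cast hj
          omega
        · exact h
      have hjN : j ≤ N := by
        by_contra hcon
        push_neg at hcon
        have hmono := ladderT_mono (η := η) (show N + 1 ≤ j by omega)
        rw [hj] at hmono
        exact hN2 (le_trans hmono (by exact_mod_cast htn))
      have hzero : ∀ k c, k < j → ladderT η k = ((c : ℕ) : ℕ∞) → Sw η (c : ℤ) = 0 := by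
        intro k c hk hkc
        have hct : c < t := ladderT_strict_mono j k c t hk hkc hj
        have h5 := hmin c hct
        have h6 := ladderT_height_nonneg hkc
        omega
      have hchainB := chain_B hc hτ hj
      -- split the reversed list
      rw [Yrev, map_range_split (fun i => Qcal η (i + 1)) N j hj1 hjN]
      have hl₁ : ∀ x ∈ (List.range (j - 1)).map (fun i => Qcal η (i + 1)),
          (fun m => decide (Multiset.card m < 2)) x = true := by
        intro x hx
        rw [List.mem_map] at hx
        obtain ⟨i, hi, rfl⟩ := hx
        rw [List.mem_range] at hi
        obtain ⟨c, hca, hc'⟩ := hfin i (by omega)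
        obtain ⟨d, hda, hd'⟩ := hfin (i + 1) (by omega)
        have hcard := card_Qcal_succ hc' hd'
        have h5 := hzero i c (by omega) hc'
        have h6 := hzero (i + 1) d (by omega) hd'
        simp only [decide_eq_true_eq]
        omega
      obtain ⟨cj, hcja, hcj⟩ := hfin (j - 1) (by omega)
      have hj' : ladderT η ((j - 1) + 1) = ((t : ℕ) : ℕ∞) := by
        rw [show (j - 1) + 1 = j by omega]; exact hj
      have hph : (fun m => decide (Multiset.card m < 2)) (Qcal η (j - 1 + 1)) = false := by
        have hcard := card_Qcal_succ hcj hj'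
        have h5 := hzero (j - 1) cj (by omega) hcj
        simp only [decide_eq_false_iff_not, not_lt]
        omega
      rw [dropWhile_concat _ _ _ _ hl₁ hph]
      show _ = (upsilon 1 (Qcal η (j - 1 + 1))
        :: (List.range (N - j)).map (fun i => Qcal η (i + j + 1))).reverse
      rw [List.reverse_cons]
      have hNeg : tildeTinv (theta (-1) η) (n + 1) = N - j + 1 := by
        have hKN : ladderT (theta (-1) η) (N - j + 1) = ((a + 1 : ℕ) : ℕ∞) := by
          refine hchainB (N - j) a ?_
          rw [show j + (N - j) = N by omega]; exact ha
        refine tildeTinv_eq ?_ ?_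
        · rw [hKN]
          exact_mod_cast by omega
        · cases hs : ladderT η (N + 1) with
          | top =>
            rw [ladder_shift_step_top hKN ha hs]
            intro hcon; rw [top_le_iff] at hcon
            exact (ENat.coe_ne_top (n + 1)) (by exact_mod_cast hcon)
          | coe s =>
            rw [hs] at hN2
            have hsn : ¬ s ≤ n := fun h => hN2 (by exact_mod_cast h)
            rw [ladder_shift_step_coe hKN ha hs]
            intro hcon
            have : s + 1 ≤ n + 1 := by exact_mod_cast hcon
            omega
      rw [hNeg, List.range_succ, List.map_append, List.map_singleton]
      congr 1
      · -- prefix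
        rw [map_range_reverse]
        refine List.map_congr_left fun i hi => ?_
        rw [List.mem_range] at hi
        obtain ⟨c, hca, hc'⟩ := hfin (N - i - 1) (by omega)
        have hK : ladderT (theta (-1) η) (N - j - i) = ((c + 1 : ℕ) : ℕ∞) := by
          have := hchainB (N - j - i - 1) c
            (by rw [show j + (N - j - i - 1) = N - i - 1 by omega]; exact hc')
          rwa [show N - j - i - 1 + 1 = N - j - i by omega] at this
        have hQ := Qcal_negshift hK hc'
        rw [show N - j + 1 - i = (N - j - i) + 1 by omega, hQ]
        congr 1
        omega
      · rw [show N - j + 1 - (N - j) = 1 by omega]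
        have hQj : Qcal η ((j - 1) + 1)
            = upsilon (0 - Sw η ((t : ℤ) - 1)).toNat (Pc η ((t : ℤ) - 1)) := by
          rw [Qcal_succ hcj hj', hzero (j - 1) cj (by omega) hcj]
        have hSt1 : Sw η ((t : ℤ) - 1) ≤ 0 := by
          have h7 := hmin (t - 1) (by omega)
          rwa [show ((t - 1 : ℕ) : ℤ) = (t : ℤ) - 1 by omega] at h7
        rw [Qcal_one_B hc hτ, hQj,
          show (1 - Sw η ((t : ℤ) - 1)).toNat = (0 - Sw η ((t : ℤ) - 1)).toNat + 1 by omega,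
          upsilon_succ]

end Helpers6
theorem stmt11 (ω : Om) (n : ℕ) :
    spine ω n = (List.range (tildeTinv (dual (n : ℤ) ω) n)).map
        (fun i => Qcal (dual (n : ℤ) ω) (tildeTinv (dual (n : ℤ) ω) n - i)) := by
  induction n with
  | zero =>
    have h0 : tildeTinv (dual ((0 : ℕ) : ℤ) ω) 0 = 0 := by
      refine tildeTinv_eq ?_ ?_
      · rw [ladderT_zero]; exact le_rfl
      · intro hcon
        have h1 := ladderT_ge (η := dual ((0 : ℕ) : ℤ) ω) (0 + 1)
        have h2 := le_trans h1 hcon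
        simp at h2
    rw [h0]
    simp [spine]
  | succ n ih =>
    have hdual : dual (((n + 1 : ℕ)) : ℤ) ω = theta (-1) (dual ((n : ℕ) : ℤ) ω) := by
      rw [show (((n + 1 : ℕ)) : ℤ) = ((n : ℕ) : ℤ) + 1 by omega, dual_succ]
    have hPc : Pc ω ((n : ℕ) : ℤ) = Pc (dual ((n : ℕ) : ℤ) ω) (-1) := by
      have harg : ((n : ℕ) : ℤ) - (-1) - 1 = ((n : ℕ) : ℤ) := by ring
      unfold Pc dual
      rw [harg]
    show phiSp (spine ω n) (Pc ω ((n : ℕ) : ℤ)) = _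
    rw [ih, hPc, hdual]
    exact (step_main (dual ((n : ℕ) : ℤ) ω) n).symm

end
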